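/- Consider the convex optimization problem: minimize ϑ over a measurable power policy p(t) ≥ 0 and ϑ, subject to ∫_{t_k}^{t_{k+1}} E[B log₂(1 + p(t)h(t)/δ²)] dt ≥ S and p(t)·M(t) ≤ ϑ for all t, where M(t) = max_{j∈N} h_{m,j}(t) > 0 is deterministic (or treated pointwise). Then the optimal policy is p*(t) = ϑ*/M(t), where ϑ* is the unique solution of ∫_{t_k}^{t_{k+1}} E[B log₂(1 + ϑ·h(t)/(M(t)δ²))] dt = S. -/

import Mathlib

open MeasureTheory Real intervalIntegral

lemma P1_key {Ω : Type*} [MeasurableSpace Ω] (μ : Measure Ω) [IsProbabilityMeasure μ]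
    (B c1 c2 : ℝ) (f : Ω → ℝ) (hB : 0 < B) (hc1 : 0 ≤ c1) (hc : c1 < c2)
    (hf : ∀ ω, 0 < f ω) :
    (∫ ω, B * Real.logb 2 (1 + c1 * f ω) ∂μ) ≤ (∫ ω, B * Real.logb 2 (1 + c2 * f ω) ∂μ)
    ∧ ((∫ ω, B * Real.logb 2 (1 + c1 * f ω) ∂μ) = (∫ ω, B * Real.logb 2 (1 + c2 * f ω) ∂μ)
       → (∫ ω, B * Real.logb 2 (1 + c2 * f ω) ∂μ) = 0) := by
  have hc2 : 0 < c2 := lt_of_le_of_lt hc1 hc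
  set q : Ω → ℝ := fun ω => B * Real.logb 2 (1 + c1 * f ω) with hq
  set g : Ω → ℝ := fun ω => B * Real.logb 2 (1 + c2 * f ω) with hg
  have h1b : (1:ℝ) < 2 := one_lt_two
  have hq_nonneg : ∀ ω, 0 ≤ q ω := fun ω =>
    mul_nonneg hB.le (Real.logb_nonneg h1b (by nlinarith [hf ω, (hf ω).le]))
  have hg_pos : ∀ ω, 0 < g ω := fun ω =>
    mul_pos hB (Real.logb_pos h1b (by nlinarith [hf ω]))
  have hqg : ∀ ω, q ω < g ω := by
    intro ω
    have h1 : (0:ℝ) < 1 + c1 * f ω := by nlinarith [hf ω]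
    exact mul_lt_mul_of_pos_left
      (Real.logb_lt_logb h1b h1 (by nlinarith [hf ω])) hB
  -- inversion: f in terms of g
  have hinv : ∀ ω, f ω = ((2:ℝ) ^ (g ω / B) - 1) / c2 := by
    intro ω
    have h2 : (0:ℝ) < 1 + c2 * f ω := by nlinarith [hf ω]
    have : g ω / B = Real.logb 2 (1 + c2 * f ω) := by
      field_simp [hg]
      rfl
    rw [this, Real.rpow_logb two_pos (by norm_num) h2]
    field_simp
    ring
  have hmeas_rpow : Measurable fun y : ℝ => (((2:ℝ) ^ (y / B) - 1) / c2) :=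
    by
      have : (fun y : ℝ => ((2:ℝ) ^ (y / B) - 1) / c2) =
          fun y : ℝ => (Real.exp (Real.log 2 * (y / B)) - 1) / c2 := by
        funext y; rw [Real.rpow_def_of_pos two_pos]
      rw [this]
      exact ((Real.measurable_exp.comp
        ((measurable_id.div_const B).const_mul (Real.log 2))).sub measurable_const).div_const c2
  by_cases hInt : Integrable g μ
  · -- g integrable: f aemeasurable, q integrable, strict inequality
    have hfm : AEMeasurable f μ := by
      have : AEMeasurable g μ := hInt.aemeasurable
      have := hmeas_rpow.comp_aemeasurable this
      exact this.congr (Filter.Eventually.of_forall fun ω => (hinv ω).symm)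
    have hqm : AEMeasurable q μ := by
      have : Measurable fun x : ℝ => B * Real.logb 2 (1 + c1 * x) := by
        unfold Real.logb
        exact measurable_const.mul
          ((Real.measurable_log.comp ((measurable_id.const_mul c1).const_add 1)).div_const _)
      exact this.comp_aemeasurable hfm
    have hqInt : Integrable q μ := by
      refine hInt.mono hqm.aestronglyMeasurable ?_
      refine Filter.Eventually.of_forall fun ω => ?_
      rw [Real.norm_eq_abs, Real.norm_eq_abs, abs_of_nonneg (hq_nonneg ω),
        abs_of_nonneg (hg_pos ω).le]
      exact (hqg ω).le
    have hlt : (∫ ω, q ω ∂μ) < ∫ ω, g ω ∂μ := by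
      have hsub : 0 < ∫ ω, (g ω - q ω) ∂μ := by
        rw [integral_pos_iff_support_of_nonneg_ae
          (Filter.Eventually.of_forall fun ω => sub_nonneg.2 (hqg ω).le)
          (hInt.sub hqInt)]
        have : Function.support (fun ω => g ω - q ω) = Set.univ := by
          ext ω; simp [sub_ne_zero.2 (hqg ω).ne']
        rw [this]
        simp
      have := integral_sub hInt hqInt
      linarith [this ▸ hsub]
    exact ⟨hlt.le, fun hEq => absurd hEq hlt.ne⟩
  · -- g not integrable: both integrals are 0
    have hG0 : (∫ ω, g ω ∂μ) = 0 := integral_undef hInt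
    have hQ0 : (∫ ω, q ω ∂μ) = 0 := by
      by_cases hc10 : c1 = 0
      · simp [hq, hc10]
      · have hc1p : 0 < c1 := lt_of_le_of_ne hc1 (Ne.symm hc10)
        refine integral_undef fun hqInt => hInt ?_
        -- from q integrable get f aemeasurable
        have hfm : AEMeasurable f μ := by
          have hinv1 : ∀ ω, f ω = ((2:ℝ) ^ (q ω / B) - 1) / c1 := by
            intro ω
            have h1 : (0:ℝ) < 1 + c1 * f ω := by nlinarith [hf ω]
            have : q ω / B = Real.logb 2 (1 + c1 * f ω) := by field_simp [hq]; rfl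
            rw [this, Real.rpow_logb two_pos (by norm_num) h1]
            field_simp
            ring
          have hm1 : Measurable fun y : ℝ => (((2:ℝ) ^ (y / B) - 1) / c1) := by
            have heq : (fun y : ℝ => ((2:ℝ) ^ (y / B) - 1) / c1) =
                fun y : ℝ => (Real.exp (Real.log 2 * (y / B)) - 1) / c1 := by
              funext y; rw [Real.rpow_def_of_pos two_pos]
            rw [heq]
            exact ((Real.measurable_exp.comp
              ((measurable_id.div_const B).const_mul (Real.log 2))).sub
                measurable_const).div_const c1
          exact (hm1.comp_aemeasurable hqInt.aemeasurable).congr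
            (Filter.Eventually.of_forall fun ω => (hinv1 ω).symm)
        have hgm : AEMeasurable g μ := by
          have : Measurable fun x : ℝ => B * Real.logb 2 (1 + c2 * x) := by
            unfold Real.logb
            exact measurable_const.mul
              ((Real.measurable_log.comp ((measurable_id.const_mul c2).const_add 1)).div_const _)
          exact this.comp_aemeasurable hfm
        -- bound: g ≤ B * logb 2 (c2/c1) + q
        have hr1 : 1 ≤ c2 / c1 := (one_le_div hc1p).2 hc.le
        have hbound : ∀ ω, g ω ≤ B * Real.logb 2 (c2 / c1) + q ω := by
          intro ω
          have h1 : (0:ℝ) < 1 + c1 * f ω := by nlinarith [hf ω]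
          have h2 : (0:ℝ) < 1 + c2 * f ω := by nlinarith [hf ω]
          have hle : 1 + c2 * f ω ≤ (c2 / c1) * (1 + c1 * f ω) := by
            rw [mul_add]
            have : c2 / c1 * (c1 * f ω) = c2 * f ω := by field_simp
            rw [this]
            nlinarith [hf ω]
          have := Real.logb_le_logb_of_le one_lt_two h2 hle
          rw [Real.logb_mul (by positivity) h1.ne'] at this
          calc g ω ≤ B * (Real.logb 2 (c2/c1) + Real.logb 2 (1 + c1 * f ω)) :=
                mul_le_mul_of_nonneg_left this hB.le
            _ = B * Real.logb 2 (c2 / c1) + q ω := by ring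
        refine Integrable.mono ((integrable_const (B * Real.logb 2 (c2/c1))).add hqInt)
          hgm.aestronglyMeasurable (Filter.Eventually.of_forall fun ω => ?_)
        rw [Real.norm_eq_abs, Real.norm_eq_abs, abs_of_nonneg (hg_pos ω).le,
          abs_of_nonneg]
        · exact hbound ω
        · exact add_nonneg (mul_nonneg hB.le (Real.logb_nonneg one_lt_two hr1)) (hq_nonneg ω)
    exact ⟨le_of_eq (hQ0.trans hG0.symm), fun _ => hG0⟩

set_option maxHeartbeats 1000000 in
theorem P1_optimal_policy
    {Ω : Type*} [MeasurableSpace Ω] (μ : Measure Ω) [IsProbabilityMeasure μ]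
    (B δ2 S tk tk1 : ℝ) (hB : 0 < B) (hδ2 : 0 < δ2) (hS : 0 < S) (ht : tk < tk1)
    (h : ℝ → Ω → ℝ) (M : ℝ → ℝ)
    (hh_pos : ∀ t ω, 0 < h t ω) (hM_pos : ∀ t, 0 < M t)
    -- throughput functional: expected rate under a power profile p
    (Thp : (ℝ → ℝ) → ℝ)
    (hThp : ∀ p : ℝ → ℝ,
      Thp p = ∫ t in tk..tk1, ∫ ω, B * Real.logb 2 (1 + p t * h t ω / δ2) ∂μ)
    (ϑstar : ℝ) (hϑstar_nonneg : 0 ≤ ϑstar)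
    -- ϑ* solves the tight throughput equation with p(t) = ϑ*/M(t)
    (hϑstar_eq :
      (∫ t in tk..tk1,
        ∫ ω, B * Real.logb 2 (1 + ϑstar * h t ω / (M t * δ2)) ∂μ) = S) :
    -- feasibility of the candidate optimal policy p*(t) = ϑ*/M(t)
    ((∀ t, 0 ≤ ϑstar / M t) ∧
      S ≤ Thp (fun t => ϑstar / M t) ∧
      (∀ t, t ∈ Set.Ico tk tk1 → (ϑstar / M t) * M t ≤ ϑstar)) ∧
    -- optimality: any feasible pair (p, ϑ) satisfies ϑ* ≤ ϑ
    (∀ (p : ℝ → ℝ) (ϑ : ℝ),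
      (∀ t, 0 ≤ p t) →
      S ≤ Thp p →
      (∀ t, t ∈ Set.Ico tk tk1 → p t * M t ≤ ϑ) →
      ϑstar ≤ ϑ) := by
  constructor
  · refine ⟨fun t => div_nonneg hϑstar_nonneg (hM_pos t).le, ?_, fun t _ =>
      le_of_eq (div_mul_cancel₀ ϑstar (hM_pos t).ne')⟩
    rw [hThp]
    refine le_of_eq ?_
    rw [← hϑstar_eq]
    congr 1
    funext t
    congr 1
    funext ω
    rw [div_mul_eq_mul_div, div_div]
  · intro p ϑ hp hpS hpc
    by_contra hlt
    push_neg at hlt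
    have htk : tk ∈ Set.Ico tk tk1 := ⟨le_refl _, ht⟩
    have hϑ0 : 0 ≤ ϑ := le_trans (mul_nonneg (hp tk) (hM_pos tk).le) (hpc tk htk)
    set G : ℝ → ℝ := fun t => ∫ ω, B * Real.logb 2 (1 + (ϑstar / (M t * δ2)) * h t ω) ∂μ
      with hGdef
    set Q : ℝ → ℝ := fun t => ∫ ω, B * Real.logb 2 (1 + (p t / δ2) * h t ω) ∂μ
      with hQdef
    have hGS : (∫ t in Set.Ioc tk tk1, G t) = S := by
      rw [← intervalIntegral.integral_of_le ht.le, ← hϑstar_eq]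
      simp only [hGdef, div_mul_eq_mul_div]
    have hQS : S ≤ ∫ t in Set.Ioc tk tk1, Q t := by
      rw [← intervalIntegral.integral_of_le ht.le]
      have : (∫ t in tk..tk1, Q t) = Thp p := by
        rw [hThp]; simp only [hQdef, div_mul_eq_mul_div]
      rw [this]; exact hpS
    have hkey : ∀ t ∈ Set.Ico tk tk1, Q t ≤ G t ∧ (Q t = G t → G t = 0) := by
      intro t htmem
      have hc1 : 0 ≤ p t / δ2 := div_nonneg (hp t) hδ2.le
      have hclt : p t / δ2 < ϑstar / (M t * δ2) := by
        rw [div_lt_div_iff₀ hδ2 (mul_pos (hM_pos t) hδ2)]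
        have h1 : p t * M t ≤ ϑ := hpc t htmem
        nlinarith [hM_pos t, hδ2]
      exact P1_key μ B _ _ (h t) hB hc1 hclt (hh_pos t)
    have hGint : IntegrableOn G (Set.Ioc tk tk1) := by
      by_contra hni
      rw [MeasureTheory.integral_undef hni] at hGS
      exact hS.ne' hGS.symm
    have hQint : IntegrableOn Q (Set.Ioc tk tk1) := by
      by_contra hni
      rw [MeasureTheory.integral_undef hni] at hQS
      exact absurd hQS (not_le.2 hS)
    have hae : ∀ᵐ t ∂(volume.restrict (Set.Ioc tk tk1)), t ∈ Set.Ico tk tk1 := by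
      have h1 : ∀ᵐ t ∂(volume.restrict (Set.Ioc tk tk1)), t ∈ Set.Ioc tk tk1 :=
        ae_restrict_mem measurableSet_Ioc
      have h2 : ∀ᵐ t : ℝ ∂volume, t ≠ tk1 := by
        have hv : volume ({tk1} : Set ℝ) = 0 := Real.volume_singleton
        rw [ae_iff]
        convert hv using 2
        ext t; simp
      filter_upwards [h1, ae_restrict_of_ae h2] with t ht1 ht2
      exact ⟨ht1.1.le, lt_of_le_of_ne ht1.2 ht2⟩
    have hQG : ∀ᵐ t ∂(volume.restrict (Set.Ioc tk tk1)), Q t ≤ G t :=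
      hae.mono fun t htm => (hkey t htm).1
    have hmono : (∫ t in Set.Ioc tk tk1, Q t) ≤ ∫ t in Set.Ioc tk tk1, G t :=
      integral_mono_ae hQint hGint hQG
    have hQeq : (∫ t in Set.Ioc tk tk1, Q t) = S := le_antisymm (hmono.trans hGS.le) hQS
    have hQGae : Q =ᵐ[volume.restrict (Set.Ioc tk tk1)] G :=
      (integral_eq_iff_of_ae_le hQint hGint hQG).1 (hQeq.trans hGS.symm)
    have hG0ae : G =ᵐ[volume.restrict (Set.Ioc tk tk1)] 0 := by
      filter_upwards [hQGae, hae] with t h1 h2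
      exact (hkey t h2).2 h1
    have : (∫ t in Set.Ioc tk tk1, G t) = 0 := by
      rw [integral_congr_ae hG0ae]; simp
    rw [hGS] at this
    exact hS.ne' this
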